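/- Let $\lambda\ne0$, $0<\alpha<\sqrt2|\lambda|$, $F(\kappa)=\tfrac14\kappa^4-\tfrac{\lambda^2}2\kappa^2$, and $L_2(E)=2\int_\alpha^{\kappa_M(E)}\frac{d\kappa}{\sqrt{E-F(\kappa)}}$ where $\kappa_M(E)=\sqrt{\lambda^2+\sqrt{\lambda^4+4E}}$. Then $L_2(E)\to 0$ as $E\to\infty$. -/
import Mathlib
open Filter MeasureTheory

lemma one_div_sqrt_eq (t : ℝ) : 1 / Real.sqrt t = t ^ (-(1/2) : ℝ) := by
  rcases le_or_gt 0 t with h | h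
  · rw [Real.rpow_neg h, ← Real.sqrt_eq_rpow, one_div]
  · rw [Real.sqrt_eq_zero_of_nonpos h.le, Real.rpow_def_of_neg h]
    have : Real.cos (-(1/2) * Real.pi) = 0 := by
      rw [show (-(1/2) * Real.pi) = -(Real.pi/2) by ring, Real.cos_neg, Real.cos_pi_div_two]
    simp [this, Real.cos_pi_div_two, mul_comm, ← div_eq_mul_inv]

lemma sqrt_tendsto : Filter.Tendsto Real.sqrt atTop atTop := by
  have := tendsto_rpow_atTop (by norm_num : (0:ℝ) < 1/2)
  refine this.congr' ?_
  filter_upwards [eventually_ge_atTop (0:ℝ)] with x hx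
  rw [Real.sqrt_eq_rpow]

lemma inv_sqrt_intble (K a : ℝ) :
    IntervalIntegrable (fun x => 1 / Real.sqrt (K - x)) MeasureTheory.volume a K := by
  have h1 : IntervalIntegrable (fun x : ℝ => x ^ (-(1/2):ℝ)) MeasureTheory.volume 0 (K - a) :=
    intervalIntegral.intervalIntegrable_rpow' (by norm_num)
  have h2 := (h1.comp_sub_left K).symm
  simp only [sub_sub_cancel, sub_zero] at h2
  have e : (fun x : ℝ => 1 / Real.sqrt (K - x)) = fun x : ℝ => (K - x) ^ (-(1/2):ℝ) := by
    funext x; rw [one_div_sqrt_eq]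
  rw [e]; exact h2

lemma inv_sqrt_integral (K a : ℝ) :
    (∫ x in a..K, 1 / Real.sqrt (K - x)) = 2 * Real.sqrt (K - a) := by
  have e : (∫ x in a..K, 1 / Real.sqrt (K - x))
      = ∫ x in a..K, (fun t : ℝ => t ^ (-(1/2):ℝ)) (K - x) := by
    simp only [one_div_sqrt_eq]
  rw [e, intervalIntegral.integral_comp_sub_left (fun t : ℝ => t ^ (-(1/2):ℝ)) K]
  simp only [sub_self, sub_zero]
  rw [integral_rpow (Or.inl (by norm_num))]
  rw [Real.sqrt_eq_rpow]
  norm_num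
  ring

set_option maxHeartbeats 2000000 in
theorem L2_tendsto_zero (l α : ℝ) (hl : l ≠ 0) (hα : 0 < α)
    (hα2 : α < Real.sqrt 2 * |l|) :
    Tendsto (fun E : ℝ =>
        2 * ∫ x in α..(Real.sqrt (l ^ 2 + Real.sqrt (l ^ 4 + 4 * E))),
          1 / Real.sqrt (E - (x ^ 4 / 4 - l ^ 2 / 2 * x ^ 2)))
      atTop (nhds 0) := by
  have hev : ∀ᶠ E : ℝ in atTop, 2*l^2 + α^2 + 1 ≤ Real.sqrt E :=
    sqrt_tendsto.eventually_ge_atTop _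
  refine squeeze_zero' (g := fun E : ℝ =>
      8 * Real.sqrt (Real.sqrt (2*l^2+2)) / Real.sqrt (Real.sqrt E)) ?_ ?_ ?_
  · -- nonnegativity
    filter_upwards [hev] with E hE
    set Q := Real.sqrt E with hQdef
    set s := Real.sqrt (l^4 + 4*E) with hsdef
    set K := Real.sqrt (l^2 + s) with hKdef
    have hQ1 : 1 ≤ Q := by linarith [sq_nonneg l, sq_nonneg α]
    have hQpos : 0 < Q := by linarith
    have hE0 : 0 < E := Real.sqrt_pos.mp hQpos
    have hl4 : (0:ℝ) ≤ l^4 := by positivity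
    have h2Q : 2*Q ≤ s := by
      have h4 : Real.sqrt (4*E) = 2*Q := by
        rw [show (4:ℝ)*E = 2^2*E by norm_num, Real.sqrt_mul (by positivity),
          Real.sqrt_sq (by norm_num), hQdef]
      calc 2*Q = Real.sqrt (4*E) := h4.symm
        _ ≤ s := Real.sqrt_le_sqrt (by linarith)
    have hαK : α ≤ K := by
      calc α = Real.sqrt (α^2) := (Real.sqrt_sq hα.le).symm
        _ ≤ K := by
            rw [hKdef]
            exact Real.sqrt_le_sqrt (by linarith [sq_nonneg l])
    have : (0:ℝ) ≤ ∫ x in α..K, 1 / Real.sqrt (E - (x ^ 4 / 4 - l ^ 2 / 2 * x ^ 2)) := by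
      apply intervalIntegral.integral_nonneg hαK
      intro u _
      positivity
    linarith
  · -- main bound
    filter_upwards [hev] with E hE
    set Q := Real.sqrt E with hQdef
    set s := Real.sqrt (l^4 + 4*E) with hsdef
    set K := Real.sqrt (l^2 + s) with hKdef
    set R := Real.sqrt Q with hRdef
    have hQ1 : 1 ≤ Q := by linarith [sq_nonneg l, sq_nonneg α]
    have hQpos : 0 < Q := by linarith
    have hE0 : 0 < E := Real.sqrt_pos.mp hQpos
    have hQsq : Q^2 = E := Real.sq_sqrt hE0.le
    have hssq : s^2 = l^4 + 4*E := Real.sq_sqrt (by positivity)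
    have hs0 : 0 ≤ s := Real.sqrt_nonneg _
    have hl4 : (0:ℝ) ≤ l^4 := by positivity
    have h2Q : 2*Q ≤ s := by
      have h4 : Real.sqrt (4*E) = 2*Q := by
        rw [show (4:ℝ)*E = 2^2*E by norm_num, Real.sqrt_mul (by positivity),
          Real.sqrt_sq (by norm_num), hQdef]
      calc 2*Q = Real.sqrt (4*E) := h4.symm
        _ ≤ s := Real.sqrt_le_sqrt (by linarith)
    have hK0 : 0 ≤ K := Real.sqrt_nonneg _
    have hKsq : K^2 = l^2 + s := Real.sq_sqrt (by positivity)
    have hαK : α ≤ K := by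
      calc α = Real.sqrt (α^2) := (Real.sqrt_sq hα.le).symm
        _ ≤ K := by
            rw [hKdef]
            exact Real.sqrt_le_sqrt (by linarith [sq_nonneg l])
    have hRsq : R^2 = Q := Real.sq_sqrt hQpos.le
    have hR0' : 0 ≤ R := Real.sqrt_nonneg _
    have hR1 : 1 ≤ R := by nlinarith [hRsq, hQ1, hR0']
    have hR0 : 0 < R := by linarith
    have hRK : R ≤ K := by
      rw [hRdef, hKdef]
      exact Real.sqrt_le_sqrt (by linarith [sq_nonneg l])
    have hfact : ∀ x : ℝ, E - (x^4/4 - l^2/2*x^2)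
        = (1/4)*(K^2 - x^2)*(x^2 - (l^2 - s)) := by
      intro x
      rw [hKsq]
      linear_combination (-(1/4) : ℝ) * hssq
    have key : ∀ x ∈ Set.Icc α K,
        (1/4) * (Q*R) * (K - x) ≤ E - (x^4/4 - l^2/2*x^2) := by
      intro x hx
      obtain ⟨hx1, hx2⟩ := hx
      have hKx : 0 ≤ K - x := by linarith
      have hfac : 0 ≤ (K - x) * (K + x - R) :=
        mul_nonneg hKx (by linarith)
      have h1 : (K - x) * R ≤ K^2 - x^2 := by nlinarith [hfac]
      have h2 : Q ≤ x^2 - (l^2 - s) := by linarith [sq_nonneg x, sq_nonneg α]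
      have ha' : 0 ≤ (K - x) * R := mul_nonneg hKx hR0.le
      have hmm : ((K - x) * R) * Q ≤ (K^2 - x^2) * (x^2 - (l^2 - s)) :=
        mul_le_mul h1 h2 hQpos.le (by linarith)
      rw [hfact x]
      nlinarith [hmm]
    have hQR0 : 0 < Real.sqrt (Q*R) := Real.sqrt_pos.2 (by positivity)
    have hbound : ∀ x ∈ Set.Icc α K,
        1 / Real.sqrt (E - (x^4/4 - l^2/2*x^2))
          ≤ (2 / Real.sqrt (Q*R)) * (1 / Real.sqrt (K - x)) := by
      intro x hx
      rcases eq_or_lt_of_le hx.2 with heq | hxK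
      · have h0 : E - (x^4/4 - l^2/2*x^2) = 0 := by
          rw [hfact x, ← heq]; ring
        rw [h0]
        simp only [Real.sqrt_zero, div_zero, one_div]
        positivity
      · have hKx : 0 < K - x := by linarith
        have hb : 0 < Real.sqrt ((1/4)*(Q*R)*(K - x)) :=
          Real.sqrt_pos.2 (by positivity)
        have hsle : Real.sqrt ((1/4)*(Q*R)*(K - x))
            ≤ Real.sqrt (E - (x^4/4 - l^2/2*x^2)) :=
          Real.sqrt_le_sqrt (key x ⟨hx.1, hx.2⟩)
        have hmain := one_div_le_one_div_of_le hb hsle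
        have hrw : Real.sqrt ((1/4)*(Q*R)*(K - x))
            = (1/2) * (Real.sqrt (Q*R) * Real.sqrt (K - x)) := by
          rw [show (1/4)*(Q*R)*(K - x) = (1/4)*((Q*R)*(K - x)) by ring,
            Real.sqrt_mul (by norm_num), Real.sqrt_mul (by positivity),
            show (1/4:ℝ) = (1/2)^2 by norm_num, Real.sqrt_sq (by norm_num)]
        rw [hrw] at hmain
        have hKx0 : 0 < Real.sqrt (K - x) := Real.sqrt_pos.2 hKx
        have heq2 : 1 / ((1/2) * (Real.sqrt (Q*R) * Real.sqrt (K - x)))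
            = (2 / Real.sqrt (Q*R)) * (1 / Real.sqrt (K - x)) := by
          field_simp
        rw [heq2] at hmain
        exact hmain
    have hgInt : IntervalIntegrable
        (fun x => (2 / Real.sqrt (Q*R)) * (1 / Real.sqrt (K - x))) volume α K :=
      (inv_sqrt_intble K α).const_mul _
    have hfm : AEStronglyMeasurable
        (fun x => 1 / Real.sqrt (E - (x^4/4 - l^2/2*x^2)))
        (volume.restrict (Set.uIoc α K)) := by
      apply Measurable.aestronglyMeasurable
      apply Measurable.div measurable_const
      exact Real.continuous_sqrt.measurable.comp (by fun_prop)
    have hfInt : IntervalIntegrable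
        (fun x => 1 / Real.sqrt (E - (x^4/4 - l^2/2*x^2))) volume α K := by
      apply hgInt.mono_fun' hfm
      refine (ae_restrict_iff' measurableSet_uIoc).mpr (ae_of_all _ fun x hx => ?_)
      rw [Set.uIoc_of_le hαK] at hx
      have hx' : x ∈ Set.Icc α K := ⟨hx.1.le, hx.2⟩
      simp only [Real.norm_eq_abs]
      rw [abs_of_nonneg (by positivity)]
      exact hbound x hx'
    have hmono := intervalIntegral.integral_mono_on hαK hfInt hgInt hbound
    have hgval : (∫ x in α..K, (2 / Real.sqrt (Q*R)) * (1 / Real.sqrt (K - x)))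
        = (2 / Real.sqrt (Q*R)) * (2 * Real.sqrt (K - α)) := by
      rw [intervalIntegral.integral_const_mul, inv_sqrt_integral]
    rw [hgval] at hmono
    set T := Real.sqrt R with hTdef
    have hT0 : 0 < T := Real.sqrt_pos.2 hR0
    have hQRsplit : Real.sqrt (Q*R) = R * T := by
      rw [Real.sqrt_mul hQpos.le, ← hRdef, ← hTdef]
    have hsK : s ≤ l^2 + 2*Q := by
      have hle : l^4 + 4*E ≤ (l^2 + 2*Q)^2 := by
        nlinarith [mul_nonneg (sq_nonneg l) hQpos.le, hQsq]
      calc s ≤ Real.sqrt ((l^2 + 2*Q)^2) := Real.sqrt_le_sqrt hle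
        _ = l^2 + 2*Q := Real.sqrt_sq (by positivity)
    have hl2Q : 0 ≤ l^2 * (Q - 1) := mul_nonneg (sq_nonneg l) (by linarith)
    have hK2b : K^2 ≤ (2*l^2+2)*Q := by
      rw [hKsq]; nlinarith [hsK, hl2Q]
    have hKle : K ≤ Real.sqrt ((2*l^2+2)*Q) := by
      calc K = Real.sqrt (K^2) := (Real.sqrt_sq hK0).symm
        _ ≤ Real.sqrt ((2*l^2+2)*Q) := Real.sqrt_le_sqrt hK2b
    have hKα : Real.sqrt (K - α) ≤ Real.sqrt (Real.sqrt (2*l^2+2)) * T := by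
      rw [hTdef, ← Real.sqrt_mul (Real.sqrt_nonneg _)]
      apply Real.sqrt_le_sqrt
      have hmul : Real.sqrt (2*l^2+2) * R = Real.sqrt ((2*l^2+2)*Q) := by
        rw [Real.sqrt_mul (by positivity), ← hRdef]
      rw [hmul]
      linarith
    have hc1 : 0 ≤ Real.sqrt (Real.sqrt (2*l^2+2)) := Real.sqrt_nonneg _
    calc 2 * ∫ x in α..K, 1 / Real.sqrt (E - (x ^ 4 / 4 - l ^ 2 / 2 * x ^ 2))
        ≤ 2 * ((2 / Real.sqrt (Q*R)) * (2 * Real.sqrt (K - α))) := by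
          linarith [hmono]
      _ = 8 * Real.sqrt (K - α) / (R * T) := by
          rw [hQRsplit]; field_simp; ring
      _ ≤ 8 * Real.sqrt (Real.sqrt (2*l^2+2)) / R := by
          rw [div_le_div_iff₀ (by positivity) (by positivity)]
          have hmul2 := mul_le_mul_of_nonneg_right hKα hR0.le
          nlinarith [hmul2]
  · exact Tendsto.div_atTop tendsto_const_nhds (sqrt_tendsto.comp sqrt_tendsto)
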